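/- Let d ≥ 0 be even, say d = 2k, and let N^d be the normalized cardinal B-spline of degree d, i.e., N^d(x) = (1/d!) ∑_{i=0}^{d+1} (-1)^i C(d+1, i) (x-i)_+^d. Then d! · ∑_{j=-k}^{k} (-1)^j N^d(j + (d+1)/2) = E_d, the d-th Euler (secant) number. -/

import Mathlib

/-- Truncated power: `(x)_+^d = x^d` for `x ≥ 0`, and `0` for `x < 0`. -/
noncomputable def truncPow (x : ℝ) (d : ℕ) : ℝ := if 0 ≤ x then x ^ d else 0

/-- The normalized cardinal B-spline of degree `d` with knots `0, 1, …, d+1`. -/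
noncomputable def cardB (d : ℕ) (x : ℝ) : ℝ :=
  (1 / (d.factorial : ℝ)) * ∑ i ∈ Finset.range (d + 2),
    (-1 : ℝ) ^ i * ((d + 1).choose i) * truncPow (x - i) d

/-- The n-th Euler (secant) number `E_n`, defined by `sec t = ∑ E_n t^n / n!`. -/
noncomputable def eulerNumber (n : ℕ) : ℝ := iteratedDeriv n (fun t => (Real.cos t)⁻¹) 0

open Complex Finset


private lemma analyticOnNhd_iteratedDeriv {U : Set ℂ} {f : ℂ → ℂ}
    (hf : AnalyticOnNhd ℂ f U) (n : ℕ) : AnalyticOnNhd ℂ (iteratedDeriv n f) U := by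
  induction n with
  | zero => simpa [iteratedDeriv_zero] using hf
  | succ n ih => rw [iteratedDeriv_succ]; exact ih.deriv

private lemma bridge {U : Set ℂ} (hU : IsOpen U) {f : ℂ → ℂ} (hf : AnalyticOnNhd ℂ f U)
    {r : ℝ → ℝ} (hr : ∀ t : ℝ, (t : ℂ) ∈ U → f t = (r t : ℂ)) (n : ℕ) :
    ∀ t : ℝ, (t : ℂ) ∈ U → ((iteratedDeriv n r t : ℝ) : ℂ) = iteratedDeriv n f t := by
  induction n with
  | zero => simpa using fun t ht => (hr t ht).symm
  | succ n ih =>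
    intro t ht
    have hga : AnalyticOnNhd ℂ (iteratedDeriv n f) U := analyticOnNhd_iteratedDeriv hf n
    set g := iteratedDeriv n f with hg
    have hgd : HasDerivAt g (deriv g t) t := ((hga _ ht).differentiableAt).hasDerivAt
    have hmem : {s : ℝ | (s : ℂ) ∈ U} ∈ nhds t :=
      Complex.continuous_ofReal.continuousAt.preimage_mem_nhds (hU.mem_nhds ht)
    have hev : (fun s : ℝ => (((iteratedDeriv n r s : ℝ) : ℂ))) =ᶠ[nhds t] fun s => g s :=
      Filter.eventually_of_mem hmem fun s hs => ih s hs
    have h1 : HasDerivAt (fun s : ℝ => (g s).re) (deriv g t).re t := hgd.real_of_complex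
    have h2 : HasDerivAt (iteratedDeriv n r) (deriv g t).re t := by
      apply h1.congr_of_eventuallyEq
      filter_upwards [hev] with s hs
      simpa using congrArg Complex.re hs
    have h3 : HasDerivAt (fun s : ℝ => g s) (deriv g t) t := hgd.comp_ofReal
    have h4 : HasDerivAt (fun s : ℝ => (((iteratedDeriv n r s : ℝ) : ℂ))) (deriv g t) t :=
      h3.congr_of_eventuallyEq hev
    have h5 : HasDerivAt (fun s : ℝ => (((iteratedDeriv n r s : ℝ) : ℂ)).im) (deriv g t).im t :=
      Complex.imCLM.hasFDerivAt.comp_hasDerivAt t h4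
    have him : (deriv g t).im = 0 := by
      have h6 : HasDerivAt (fun _ : ℝ => (0 : ℝ)) 0 t := hasDerivAt_const t 0
      have heq : (fun s : ℝ => (((iteratedDeriv n r s : ℝ) : ℂ)).im) = fun _ => (0 : ℝ) := by
        funext s; simp
      rw [heq] at h5
      exact h5.unique h6
    rw [iteratedDeriv_succ, iteratedDeriv_succ, h2.deriv, ← hg]
    exact Complex.ext (by simp) (by simp [him])

private lemma scaleDeriv {U : Set ℂ} (hU : IsOpen U) {f : ℂ → ℂ}
    (hf : AnalyticOnNhd ℂ f U) (c : ℂ) (n : ℕ) :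
    ∀ z : ℂ, c * z ∈ U →
      iteratedDeriv n (fun w => f (c * w)) z = c ^ n * iteratedDeriv n f (c * z) := by
  induction n with
  | zero => simp
  | succ n ih =>
    intro z hz
    have hV : IsOpen {w : ℂ | c * w ∈ U} := hU.preimage (by continuity)
    have hev : iteratedDeriv n (fun w => f (c * w)) =ᶠ[nhds z]
        fun w => c ^ n * iteratedDeriv n f (c * w) :=
      Filter.eventually_of_mem (hV.mem_nhds hz) ih
    have hg : HasDerivAt (iteratedDeriv n f) (deriv (iteratedDeriv n f) (c * z)) (c * z) :=
      ((analyticOnNhd_iteratedDeriv hf n _ hz).differentiableAt).hasDerivAt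
    have hi : HasDerivAt (fun w : ℂ => c * w) c z := by
      simpa using (hasDerivAt_id z).const_mul c
    have hcomp : HasDerivAt (fun w => iteratedDeriv n f (c * w))
        (deriv (iteratedDeriv n f) (c * z) * c) z := hg.comp z hi
    rw [iteratedDeriv_succ, hev.deriv_eq, deriv_const_mul _ hcomp.differentiableAt,
      hcomp.deriv, iteratedDeriv_succ]
    ring

private lemma constMulDeriv {U : Set ℂ} (hU : IsOpen U) {f : ℂ → ℂ}
    (hf : AnalyticOnNhd ℂ f U) (c : ℂ) (n : ℕ) :
    ∀ z ∈ U, iteratedDeriv n (fun w => c * f w) z = c * iteratedDeriv n f z := by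
  induction n with
  | zero => simp
  | succ n ih =>
    intro z hz
    have hev : iteratedDeriv n (fun w => c * f w) =ᶠ[nhds z]
        fun w => c * iteratedDeriv n f w :=
      Filter.eventually_of_mem (hU.mem_nhds hz) ih
    rw [iteratedDeriv_succ, hev.deriv_eq, iteratedDeriv_succ,
      deriv_const_mul _ ((analyticOnNhd_iteratedDeriv hf n _ hz).differentiableAt)]

private lemma addDeriv {U : Set ℂ} (hU : IsOpen U) {f g : ℂ → ℂ}
    (hf : AnalyticOnNhd ℂ f U) (hg : AnalyticOnNhd ℂ g U) (n : ℕ) :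
    ∀ z ∈ U, iteratedDeriv n (fun w => f w + g w) z
      = iteratedDeriv n f z + iteratedDeriv n g z := by
  induction n with
  | zero => simp
  | succ n ih =>
    intro z hz
    have hev : iteratedDeriv n (fun w => f w + g w) =ᶠ[nhds z]
        fun w => iteratedDeriv n f w + iteratedDeriv n g w :=
      Filter.eventually_of_mem (hU.mem_nhds hz) ih
    rw [iteratedDeriv_succ, hev.deriv_eq, iteratedDeriv_succ, iteratedDeriv_succ,
      deriv_fun_add ((analyticOnNhd_iteratedDeriv hf n _ hz).differentiableAt)
        ((analyticOnNhd_iteratedDeriv hg n _ hz).differentiableAt)]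

/-- Vanishing of iterated derivatives at 0 of `(exp z - 1)^m * w z` for `n < m`. -/
private lemma vanish {U : Set ℂ} (hU : IsOpen U) (h0 : (0 : ℂ) ∈ U) :
    ∀ (n m : ℕ), n < m → ∀ w : ℂ → ℂ, AnalyticOnNhd ℂ w U →
      iteratedDeriv n (fun z => (Complex.exp z - 1) ^ m * w z) 0 = 0 := by
  intro n
  induction n with
  | zero =>
    intro m hm w _
    simp [iteratedDeriv_zero, zero_pow (by omega : m ≠ 0)]
  | succ n ih =>
    intro m hm w hw
    obtain ⟨m', rfl⟩ : ∃ m', m = m' + 1 := ⟨m - 1, by omega⟩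
    rw [iteratedDeriv_succ']
    have hder : ∀ z ∈ U, deriv (fun z => (Complex.exp z - 1) ^ (m' + 1) * w z) z
        = (Complex.exp z - 1) ^ m' *
          (((m' : ℂ) + 1) * Complex.exp z * w z + (Complex.exp z - 1) * deriv w z) := by
      intro z hz
      have hw' : HasDerivAt w (deriv w z) z := ((hw z hz).differentiableAt).hasDerivAt
      have he : HasDerivAt (fun z => Complex.exp z - 1) (Complex.exp z) z :=
        (Complex.hasDerivAt_exp z).sub_const 1
      have hp : HasDerivAt (fun z => (Complex.exp z - 1) ^ (m' + 1))
          (((m' + 1 : ℕ) : ℂ) * (Complex.exp z - 1) ^ m' * Complex.exp z) z := by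
        simpa using he.fun_pow (m' + 1)
      rw [(hp.fun_mul hw').deriv]
      push_cast
      ring
    have hev : deriv (fun z => (Complex.exp z - 1) ^ (m' + 1) * w z) =ᶠ[nhds 0]
        fun z => (Complex.exp z - 1) ^ m' *
          (((m' : ℂ) + 1) * Complex.exp z * w z + (Complex.exp z - 1) * deriv w z) :=
      Filter.eventually_of_mem (hU.mem_nhds h0) hder
    rw [hev.iteratedDeriv_eq n]
    refine ih m' (by omega) _ ?_
    have hexp : AnalyticOnNhd ℂ Complex.exp U := fun z _ => analyticAt_cexp
    exact ((analyticOnNhd_const.mul hexp).mul hw).add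
      ((hexp.sub analyticOnNhd_const).mul hw.deriv)


/-- Iterated derivative of a finite sum of exponentials. -/
private lemma expSumDeriv (N : ℕ) (c a : ℕ → ℂ) (n : ℕ) :
    iteratedDeriv n (fun z => ∑ r ∈ Finset.range N, c r * Complex.exp (a r * z))
      = fun z => ∑ r ∈ Finset.range N, c r * a r ^ n * Complex.exp (a r * z) := by
  induction n with
  | zero => funext z; simp
  | succ n ih =>
    rw [iteratedDeriv_succ, ih]
    funext z
    have hD : ∀ r ∈ Finset.range N,
        HasDerivAt (fun z => c r * a r ^ n * Complex.exp (a r * z))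
          (c r * a r ^ n * (Complex.exp (a r * z) * a r)) z := by
      intro r _
      have hi : HasDerivAt (fun z : ℂ => a r * z) (a r) z := by
        simpa using (hasDerivAt_id z).const_mul (a r)
      exact ((Complex.hasDerivAt_exp (a r * z)).comp z hi).const_mul _
    rw [deriv_fun_sum fun r hr => (hD r hr).differentiableAt]
    refine Finset.sum_congr rfl fun r hr => ?_
    rw [(hD r hr).deriv]
    ring


private lemma geomAux (x : ℂ) (n : ℕ) :
    (x + 1) * ∑ r ∈ Finset.range (n + 1), (-1 : ℂ) ^ r * x ^ r
      = 1 + (-1) ^ n * x ^ (n + 1) := by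
  induction n with
  | zero => simp; ring
  | succ n ih => rw [Finset.sum_range_succ, mul_add, ih]; ring


private lemma triSwap {M : Type*} [AddCommMonoid M] (n : ℕ) (F : ℕ → ℕ → M) :
    ∑ r ∈ range n, ∑ i ∈ range (n - r), F r i
      = ∑ i ∈ range n, ∑ r ∈ range (n - i), F r i := by
  have ext : ∀ G : ℕ → ℕ → M, ∑ r ∈ range n, ∑ i ∈ range (n - r), G r i
      = ∑ r ∈ range n, ∑ i ∈ range n, if r + i < n then G r i else 0 := by
    intro G
    refine Finset.sum_congr rfl fun r hr => ?_
    rw [Finset.mem_range] at hr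
    rw [← Finset.sum_subset (Finset.range_subset_range.2 (by omega : n - r ≤ n))]
    · exact Finset.sum_congr rfl fun i hi => by
        rw [Finset.mem_range] at hi; rw [if_pos (by omega)]
    · intro i _ hi
      rw [Finset.mem_range] at hi
      rw [if_neg (by omega)]
  rw [ext F, ext fun i r => F r i, Finset.sum_comm]
  refine Finset.sum_congr rfl fun r _ => Finset.sum_congr rfl fun i _ => by
    rw [add_comm]


/-- The key polynomial identity, for even degree `d = 2k`. -/
private lemma polyId (k : ℕ) (x : ℂ) :
    (x + 1) * ∑ r ∈ range (2 * k + 1),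
        (-1 : ℂ) ^ r * (∑ i ∈ range (2 * k + 1 - r), ((2 * k + 1).choose i : ℂ)) * x ^ r
      = 2 ^ (2 * k + 1) + (x - 1) ^ (2 * k + 1) := by
  set d := 2 * k with hd
  -- turn into a double sum and swap
  have step1 : ∑ r ∈ range (d + 1),
      (-1 : ℂ) ^ r * (∑ i ∈ range (d + 1 - r), ((d + 1).choose i : ℂ)) * x ^ r
      = ∑ i ∈ range (d + 1), ∑ r ∈ range (d + 1 - i),
          ((d + 1).choose i : ℂ) * ((-1) ^ r * x ^ r) := by
    rw [← triSwap]
    refine Finset.sum_congr rfl fun r _ => ?_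
    rw [Finset.mul_sum, Finset.sum_mul]
    exact Finset.sum_congr rfl fun i _ => by ring
  rw [step1, Finset.mul_sum]
  have step2 : ∀ i ∈ range (d + 1),
      (x + 1) * ∑ r ∈ range (d + 1 - i), ((d + 1).choose i : ℂ) * ((-1) ^ r * x ^ r)
      = ((d + 1).choose i : ℂ) * (1 + (-1) ^ (d - i) * x ^ (d - i + 1)) := by
    intro i hi
    rw [Finset.mem_range] at hi
    have hrange : d + 1 - i = (d - i) + 1 := by omega
    rw [hrange, ← geomAux x (d - i)]
    rw [← Finset.mul_sum]
    ring
  rw [Finset.sum_congr rfl step2]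
  have split : ∑ i ∈ range (d + 1),
      ((d + 1).choose i : ℂ) * (1 + (-1) ^ (d - i) * x ^ (d - i + 1))
      = (∑ i ∈ range (d + 1), ((d + 1).choose i : ℂ))
        + ∑ i ∈ range (d + 1), ((d + 1).choose i : ℂ) * ((-1) ^ (d - i) * x ^ (d - i + 1)) := by
    rw [← Finset.sum_add_distrib]
    exact Finset.sum_congr rfl fun i _ => by ring
  rw [split]
  have h1 : (∑ i ∈ range (d + 1), ((d + 1).choose i : ℂ)) = 2 ^ (d + 1) - 1 := by
    have := Nat.sum_range_choose (d + 1)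
    have h2 : ∑ i ∈ range (d + 2), ((d + 1).choose i : ℂ) = 2 ^ (d + 1) := by
      exact_mod_cast congrArg (Nat.cast : ℕ → ℂ) this
    rw [Finset.sum_range_succ] at h2
    simp only [Nat.choose_self, Nat.cast_one] at h2
    linear_combination h2
  have h2 : ∑ i ∈ range (d + 1), ((d + 1).choose i : ℂ) * ((-1) ^ (d - i) * x ^ (d - i + 1))
      = (x - 1) ^ (d + 1) + 1 := by
    -- reflect the sum
    have hrefl := Finset.sum_range_reflect
      (fun i => ((d + 1).choose i : ℂ) * ((-1) ^ (d - i) * x ^ (d - i + 1))) (d + 1)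
    rw [← hrefl]
    -- now term j: choose (d - j) etc.
    have hsub : (x - 1) ^ (d + 1)
        = ∑ m ∈ range (d + 2), (-1 : ℂ) ^ (m + (d + 1)) * x ^ m * ((d + 1).choose m : ℂ) := by
      have := sub_pow x (1 : ℂ) (d + 1)
      simpa using this
    rw [hsub, Finset.sum_range_succ'
      (fun m => (-1 : ℂ) ^ (m + (d + 1)) * x ^ m * ((d + 1).choose m : ℂ)) (d + 1)]
    have hd1 : (-1 : ℂ) ^ d = 1 := by rw [hd, pow_mul]; norm_num
    have hlast : (-1 : ℂ) ^ (0 + (d + 1)) * x ^ 0 * ((d + 1).choose 0 : ℂ) = -1 := by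
      simp [pow_succ, hd1]
    rw [hlast]
    have hterm : ∀ j ∈ range (d + 1),
        ((d + 1).choose (d + 1 - 1 - j) : ℂ) *
          ((-1) ^ (d - (d + 1 - 1 - j)) * x ^ (d - (d + 1 - 1 - j) + 1))
        = (-1 : ℂ) ^ (j + 1 + (d + 1)) * x ^ (j + 1) * ((d + 1).choose (j + 1) : ℂ) := by
      intro j hj
      rw [Finset.mem_range] at hj
      have e1 : d + 1 - 1 - j = d - j := by omega
      have e2 : d - (d - j) = j := by omega
      have e3 : (d + 1).choose (d - j) = (d + 1).choose (j + 1) := by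
        have := Nat.choose_symm (by omega : j + 1 ≤ d + 1)
        rwa [show d + 1 - (j + 1) = d - j by omega] at this
      have e4 : (-1 : ℂ) ^ (j + 1 + (d + 1)) = (-1) ^ j := by
        rw [show j + 1 + (d + 1) = j + (d + 2) by omega, pow_add,
          show d + 2 = 2 * (k + 1) by omega, pow_mul]
        norm_num
      rw [e1, e2, e3, e4]
      ring
    rw [Finset.sum_congr rfl hterm]
    ring
  rw [h1, h2]
  ring

private lemma neg_one_pow_sub (m r : ℕ) (hr : r ≤ m) :
    (-1 : ℝ) ^ (m - r) = (-1) ^ m * (-1) ^ r := by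
  have hrr : ((-1 : ℝ)) ^ r * (-1) ^ r = 1 := by
    rw [← pow_add, ← two_mul, pow_mul]; norm_num
  calc (-1 : ℝ) ^ (m - r) = (-1) ^ (m - r) * ((-1) ^ r * (-1) ^ r) := by rw [hrr, mul_one]
    _ = (-1) ^ (m - r + r) * (-1) ^ r := by rw [← mul_assoc, ← pow_add]
    _ = (-1) ^ m * (-1) ^ r := by rw [Nat.sub_add_cancel hr]


private lemma stepA (k : ℕ) :
    ((2 * k).factorial : ℝ) * ∑ j ∈ Finset.Icc (-(k : ℤ)) (k : ℤ),
        (-1 : ℝ) ^ j * cardB (2 * k) ((j : ℝ) + (((2 * k : ℕ) : ℝ) + 1) / 2)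
    = ∑ r ∈ Finset.range (2 * k + 1), (-1 : ℝ) ^ (r + k)
        * (∑ i ∈ Finset.range (2 * k + 1 - r), (((2 * k + 1).choose i : ℕ) : ℝ))
        * ((r : ℝ) + 1 / 2) ^ (2 * k) := by
  have hIcc : Finset.Icc (-(k : ℤ)) (k : ℤ)
      = Finset.map ⟨fun m : ℕ => (m : ℤ) - k, show Function.Injective (fun m : ℕ => (m : ℤ) - k) from fun a b h => by simp only at h; omega⟩
          (Finset.range (2 * k + 1)) := by
    ext j
    simp only [Finset.mem_map, Finset.mem_range, Finset.mem_Icc, Function.Embedding.coeFn_mk]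
    constructor
    · intro ⟨h1, h2⟩; exact ⟨(j + k).toNat, by omega, by omega⟩
    · rintro ⟨m, hm, rfl⟩; omega
  rw [hIcc, Finset.sum_map, Finset.mul_sum]
  simp only [Function.Embedding.coeFn_mk]
  have hfac : ((2 * k).factorial : ℝ) ≠ 0 := Nat.cast_ne_zero.2 (2 * k).factorial_ne_zero
  have hterm : ∀ m ∈ Finset.range (2 * k + 1),
      ((2 * k).factorial : ℝ) * ((-1 : ℝ) ^ ((m : ℤ) - (k : ℤ)) *
        cardB (2 * k) ((((m : ℤ) - (k : ℤ) : ℤ) : ℝ) + (((2 * k : ℕ) : ℝ) + 1) / 2))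
      = ∑ r ∈ Finset.range (m + 1), (-1 : ℝ) ^ (r + k)
          * (((2 * k + 1).choose (m - r) : ℕ) : ℝ) * ((r : ℝ) + 1 / 2) ^ (2 * k) := by
    intro m hm
    rw [Finset.mem_range] at hm
    -- sign
    have hsgn : (-1 : ℝ) ^ ((m : ℤ) - (k : ℤ)) = (-1 : ℝ) ^ (m + k) := by
      have : (m : ℤ) - (k : ℤ) = ((m + k : ℕ) : ℤ) - ((2 * k : ℕ) : ℤ) := by push_cast; ring
      rw [this, zpow_sub₀ (by norm_num : (-1 : ℝ) ≠ 0), zpow_natCast, zpow_natCast,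
        pow_mul]
      norm_num
    -- simplify truncPow argument
    have harg : ∀ i : ℕ, (((m : ℤ) - (k : ℤ) : ℤ) : ℝ) + (((2 * k : ℕ) : ℝ) + 1) / 2 - (i : ℝ)
        = (m : ℝ) + 1 / 2 - (i : ℝ) := by
      intro i; push_cast; ring
    have hinner : ∑ i ∈ Finset.range (2 * k + 2), (-1 : ℝ) ^ i * (((2 * k + 1).choose i : ℕ) : ℝ)
          * truncPow ((((m : ℤ) - (k : ℤ) : ℤ) : ℝ) + (((2 * k : ℕ) : ℝ) + 1) / 2 - (i : ℝ)) (2 * k)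
        = ∑ r ∈ Finset.range (m + 1), (-1 : ℝ) ^ (m - r) * (((2 * k + 1).choose (m - r) : ℕ) : ℝ)
            * ((r : ℝ) + 1 / 2) ^ (2 * k) := by
      have h1 : ∀ i ∈ Finset.range (2 * k + 2), (-1 : ℝ) ^ i * (((2 * k + 1).choose i : ℕ) : ℝ)
            * truncPow ((((m : ℤ) - (k : ℤ) : ℤ) : ℝ) + (((2 * k : ℕ) : ℝ) + 1) / 2 - (i : ℝ)) (2 * k)
          = (-1 : ℝ) ^ i * (((2 * k + 1).choose i : ℕ) : ℝ)
            * truncPow ((m : ℝ) + 1 / 2 - (i : ℝ)) (2 * k) := by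
        intro i _; rw [harg i]
      rw [Finset.sum_congr rfl h1]
      -- truncate to range (m+1)
      rw [← Finset.sum_subset (Finset.range_subset_range.2 (by omega : m + 1 ≤ 2 * k + 2))]
      · -- evaluate truncPow on range (m+1), then reflect
        have h2 : ∀ i ∈ Finset.range (m + 1), (-1 : ℝ) ^ i * (((2 * k + 1).choose i : ℕ) : ℝ)
              * truncPow ((m : ℝ) + 1 / 2 - (i : ℝ)) (2 * k)
            = (-1 : ℝ) ^ i * (((2 * k + 1).choose i : ℕ) : ℝ)
              * ((m : ℝ) + 1 / 2 - (i : ℝ)) ^ (2 * k) := by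
          intro i hi
          rw [Finset.mem_range] at hi
          have : (i : ℝ) ≤ (m : ℝ) := Nat.cast_le.2 (by omega)
          rw [truncPow, if_pos (by linarith)]
        rw [Finset.sum_congr rfl h2]
        rw [← Finset.sum_range_reflect
          (fun i => (-1 : ℝ) ^ i * (((2 * k + 1).choose i : ℕ) : ℝ)
            * ((m : ℝ) + 1 / 2 - (i : ℝ)) ^ (2 * k)) (m + 1)]
        refine Finset.sum_congr rfl fun r hr => ?_
        rw [Finset.mem_range] at hr
        have e1 : m + 1 - 1 - r = m - r := by omega
        have e2 : ((m - r : ℕ) : ℝ) = (m : ℝ) - (r : ℝ) := by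
          rw [Nat.cast_sub (by omega)]
        rw [e1, e2]
        congr 2
        ring
      · intro i hi hni
        rw [Finset.mem_range] at hi hni
        have : (m : ℝ) + 1 ≤ (i : ℝ) := by exact_mod_cast Nat.cast_le.2 (by omega : m + 1 ≤ i)
        rw [truncPow, if_neg (by linarith)]
        ring
    have hclear : ∀ X : ℝ, ((2 * k).factorial : ℝ)
        * ((-1 : ℝ) ^ (m + k) * (1 / ((2 * k).factorial : ℝ) * X))
        = (-1 : ℝ) ^ (m + k) * X := by
      intro X; field_simp
    have hpow : ∀ r : ℕ, (-1 : ℝ) ^ (m + k) * ((-1 : ℝ) ^ m * (-1 : ℝ) ^ r) = (-1 : ℝ) ^ (r + k) := by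
      intro r
      rw [pow_add, pow_add]
      have hmm : ((-1 : ℝ)) ^ m * (-1) ^ m = 1 := by
        rw [← pow_add, ← two_mul, pow_mul]; norm_num
      calc (-1 : ℝ) ^ m * (-1) ^ k * ((-1) ^ m * (-1) ^ r)
          = ((-1 : ℝ) ^ m * (-1) ^ m) * ((-1) ^ r * (-1) ^ k) := by ring
        _ = (-1 : ℝ) ^ r * (-1) ^ k := by rw [hmm, one_mul]
    rw [hsgn, cardB, hclear, hinner, Finset.mul_sum]
    refine Finset.sum_congr rfl fun r hr => ?_
    rw [Finset.mem_range] at hr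
    rw [neg_one_pow_sub m r (by omega)]
    linear_combination ((((2 * k + 1).choose (m - r) : ℕ) : ℝ) * ((r : ℝ) + 1 / 2) ^ (2 * k)) * hpow r
  rw [Finset.sum_congr rfl hterm]
  -- now swap the triangle
  rw [← Finset.sum_range_reflect
    (fun m => ∑ r ∈ Finset.range (m + 1), (-1 : ℝ) ^ (r + k)
      * (((2 * k + 1).choose (m - r) : ℕ) : ℝ) * ((r : ℝ) + 1 / 2) ^ (2 * k)) (2 * k + 1)]
  have hout : ∀ m ∈ Finset.range (2 * k + 1),
      ∑ r ∈ Finset.range (2 * k + 1 - 1 - m + 1), (-1 : ℝ) ^ (r + k)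
        * (((2 * k + 1).choose (2 * k + 1 - 1 - m - r) : ℕ) : ℝ) * ((r : ℝ) + 1 / 2) ^ (2 * k)
      = ∑ r ∈ Finset.range (2 * k + 1 - m), (-1 : ℝ) ^ (r + k)
        * (((2 * k + 1).choose (2 * k - m - r) : ℕ) : ℝ) * ((r : ℝ) + 1 / 2) ^ (2 * k) := by
    intro m hm
    rw [Finset.mem_range] at hm
    have e1 : 2 * k + 1 - 1 - m + 1 = 2 * k + 1 - m := by omega
    have e2 : 2 * k + 1 - 1 - m = 2 * k - m := by omega
    rw [e1, e2]
  rw [Finset.sum_congr rfl hout]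
  rw [triSwap (2 * k + 1) (fun m r => (-1 : ℝ) ^ (r + k)
    * (((2 * k + 1).choose (2 * k - m - r) : ℕ) : ℝ) * ((r : ℝ) + 1 / 2) ^ (2 * k))]
  refine Finset.sum_congr rfl fun r hr => ?_
  rw [Finset.mem_range] at hr
  have hin : ∑ m ∈ Finset.range (2 * k + 1 - r), (-1 : ℝ) ^ (r + k)
      * (((2 * k + 1).choose (2 * k - m - r) : ℕ) : ℝ) * ((r : ℝ) + 1 / 2) ^ (2 * k)
      = ∑ i ∈ Finset.range (2 * k + 1 - r), (-1 : ℝ) ^ (r + k)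
        * (((2 * k + 1).choose i : ℕ) : ℝ) * ((r : ℝ) + 1 / 2) ^ (2 * k) := by
    rw [← Finset.sum_range_reflect
      (fun i => (-1 : ℝ) ^ (r + k) * (((2 * k + 1).choose i : ℕ) : ℝ)
        * ((r : ℝ) + 1 / 2) ^ (2 * k)) (2 * k + 1 - r)]
    refine Finset.sum_congr rfl fun m hmm => ?_
    rw [Finset.mem_range] at hmm
    have : 2 * k + 1 - r - 1 - m = 2 * k - m - r := by omega
    rw [this]
  rw [hin, ← Finset.sum_mul, ← Finset.mul_sum]

private lemma stepB (k : ℕ) :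
    ∑ r ∈ Finset.range (2 * k + 1), (-1 : ℝ) ^ (r + k)
        * (∑ i ∈ Finset.range (2 * k + 1 - r), (((2 * k + 1).choose i : ℕ) : ℝ))
        * ((r : ℝ) + 1 / 2) ^ (2 * k) = eulerNumber (2 * k) := by
  -- the two open sets
  set U : Set ℂ := {z : ℂ | Complex.exp z + 1 ≠ 0} with hUdef
  set V : Set ℂ := {w : ℂ | Complex.cos w ≠ 0} with hVdef
  have hUopen : IsOpen U :=
    IsOpen.preimage (Complex.continuous_exp.add continuous_const) isOpen_compl_singleton
  have hVopen : IsOpen V := IsOpen.preimage Complex.continuous_cos isOpen_compl_singleton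
  have h0U : (0 : ℂ) ∈ U := by
    simp only [hUdef, Set.mem_setOf_eq, Complex.exp_zero]
    norm_num
  have h0V : (0 : ℂ) ∈ V := by
    simp only [hVdef, Set.mem_setOf_eq, Complex.cos_zero]
    norm_num
  -- analyticity
  have hcosA : AnalyticOnNhd ℂ Complex.cos Set.univ :=
    Complex.analyticOnNhd_univ_iff_differentiable.mpr Complex.differentiable_cos
  set Ψ : ℂ → ℂ := fun w => (Complex.cos w)⁻¹ with hΨdef
  have hΨan : AnalyticOnNhd ℂ Ψ V := fun w hw => (hcosA w (Set.mem_univ w)).inv hw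
  set φ : ℂ → ℂ := fun z => Complex.exp ((1 / 2 : ℂ) * z) / (Complex.exp z + 1) with hφdef
  have hφan : AnalyticOnNhd ℂ φ U := by
    intro z hz
    exact (analyticAt_cexp.comp (analyticAt_const.mul analyticAt_id)).div
      (analyticAt_cexp.add analyticAt_const) hz
  set hh : ℂ → ℂ := fun z => (Complex.exp z - 1) ^ (2 * k + 1) * φ z with hhdef
  have hhan : AnalyticOnNhd ℂ hh U := fun z hz =>
    ((analyticAt_cexp.sub analyticAt_const).pow _).mul (hφan z hz)
  -- Euler number as a complex iterated derivative
  have hE : ((eulerNumber (2 * k) : ℝ) : ℂ) = iteratedDeriv (2 * k) Ψ 0 := by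
    have hb := bridge hVopen hΨan (r := fun t => (Real.cos t)⁻¹)
      (fun t _ => by
        show (Complex.cos (t : ℂ))⁻¹ = (((Real.cos t)⁻¹ : ℝ) : ℂ)
        rw [← Complex.ofReal_cos, ← Complex.ofReal_inv]) (2 * k) 0
      (by simpa using h0V)
    rw [eulerNumber]
    simpa using hb
  -- the entire exponential sum
  set Φ : ℂ → ℂ := fun z => ∑ r ∈ Finset.range (2 * k + 1),
    ((-1 : ℂ) ^ (r + k) * (∑ i ∈ Finset.range (2 * k + 1 - r), (((2 * k + 1).choose i : ℕ) : ℂ)))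
      * Complex.exp (((r : ℂ) + 1 / 2) * z) with hΦdef
  have hΦval : iteratedDeriv (2 * k) Φ 0
      = ∑ r ∈ Finset.range (2 * k + 1),
        ((-1 : ℂ) ^ (r + k) * (∑ i ∈ Finset.range (2 * k + 1 - r), (((2 * k + 1).choose i : ℕ) : ℂ)))
          * ((r : ℂ) + 1 / 2) ^ (2 * k) := by
    rw [hΦdef]
    rw [expSumDeriv (2 * k + 1)
      (fun r => (-1 : ℂ) ^ (r + k) * (∑ i ∈ Finset.range (2 * k + 1 - r), (((2 * k + 1).choose i : ℕ) : ℂ)))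
      (fun r => (r : ℂ) + 1 / 2) (2 * k)]
    simp
  -- identification of Φ on U
  have hΦeq : ∀ z ∈ U, Φ z = (-1 : ℂ) ^ k *
      ((2 : ℂ) ^ (2 * k + 1) * φ z + hh z) := by
    intro z hz
    have hden : Complex.exp z + 1 ≠ 0 := hz
    have hpoly := polyId k (Complex.exp z)
    have hsplit : ∀ r : ℕ, Complex.exp (((r : ℂ) + 1 / 2) * z)
        = (Complex.exp z) ^ r * Complex.exp ((1 / 2 : ℂ) * z) := by
      intro r
      rw [← Complex.exp_nat_mul, ← Complex.exp_add]
      congr 1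
      ring
    have h1 : Φ z = (-1 : ℂ) ^ k * Complex.exp ((1 / 2 : ℂ) * z) *
        ∑ r ∈ Finset.range (2 * k + 1),
          (-1 : ℂ) ^ r * (∑ i ∈ Finset.range (2 * k + 1 - r), (((2 * k + 1).choose i : ℕ) : ℂ))
            * (Complex.exp z) ^ r := by
      rw [hΦdef, Finset.mul_sum]
      refine Finset.sum_congr rfl fun r _ => ?_
      rw [hsplit r, pow_add]
      ring
    have h2 : ∑ r ∈ Finset.range (2 * k + 1),
        (-1 : ℂ) ^ r * (∑ i ∈ Finset.range (2 * k + 1 - r), (((2 * k + 1).choose i : ℕ) : ℂ))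
          * (Complex.exp z) ^ r
        = (2 ^ (2 * k + 1) + (Complex.exp z - 1) ^ (2 * k + 1)) / (Complex.exp z + 1) := by
      rw [eq_div_iff hden]
      linear_combination hpoly
    rw [h1, h2, hhdef, hφdef]
    field_simp
  -- split the iterated derivative of Φ
  have hsum_an : AnalyticOnNhd ℂ (fun z => (2 : ℂ) ^ (2 * k + 1) * φ z + hh z) U :=
    (fun z hz => (analyticAt_const.mul (hφan z hz)).add (hhan z hz))
  have hΦd : iteratedDeriv (2 * k) Φ 0
      = (-1 : ℂ) ^ k * ((2 : ℂ) ^ (2 * k + 1) * iteratedDeriv (2 * k) φ 0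
          + iteratedDeriv (2 * k) hh 0) := by
    have hev : Φ =ᶠ[nhds 0] fun z => (-1 : ℂ) ^ k *
        ((2 : ℂ) ^ (2 * k + 1) * φ z + hh z) :=
      Filter.eventually_of_mem (hUopen.mem_nhds h0U) hΦeq
    rw [hev.iteratedDeriv_eq (2 * k)]
    rw [constMulDeriv hUopen hsum_an ((-1 : ℂ) ^ k) (2 * k) 0 h0U]
    rw [addDeriv hUopen (fun z hz => analyticAt_const.fun_mul (hφan z hz)) hhan (2 * k) 0 h0U]
    rw [constMulDeriv hUopen hφan ((2 : ℂ) ^ (2 * k + 1)) (2 * k) 0 h0U]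
  -- the h-part vanishes
  have hhvanish : iteratedDeriv (2 * k) hh 0 = 0 := by
    rw [hhdef]
    exact vanish hUopen h0U (2 * k) (2 * k + 1) (by omega) φ hφan
  -- φ in terms of Ψ
  have hφΨ : ∀ z ∈ U, φ z = (1 / 2 : ℂ) * Ψ ((Complex.I / 2) * z) := by
    intro z hz
    have hden : Complex.exp z + 1 ≠ 0 := hz
    have hA : Complex.exp (z / 2) ≠ 0 := Complex.exp_ne_zero _
    have hxy : Complex.exp (z / 2) * Complex.exp (z / 2) = Complex.exp z := by
      rw [← Complex.exp_add]; congr 1; ring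
    have hxy' : Complex.exp (z / 2) * Complex.exp (-(z / 2)) = 1 := by
      rw [← Complex.exp_add]; simp
    have hfac : Complex.exp z + 1 = Complex.exp (z / 2)
        * (Complex.exp (z / 2) + Complex.exp (-(z / 2))) := by
      rw [mul_add, hxy, hxy']
    have hne : Complex.exp (z / 2) + Complex.exp (-(z / 2)) ≠ 0 := by
      intro h
      exact hden (by rw [hfac, h, mul_zero])
    have hcos : Complex.cos ((Complex.I / 2) * z)
        = (Complex.exp (z / 2) + Complex.exp (-(z / 2))) / 2 := by
      rw [show (Complex.I / 2) * z = (z / 2) * Complex.I by ring, Complex.cos_mul_I]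
      rfl
    rw [hΨdef, hφdef]
    simp only
    rw [show (1 / 2 : ℂ) * z = z / 2 by ring, hcos, hfac, inv_div,
      div_eq_iff (mul_ne_zero hA hne)]
    have hr : (1 / 2 : ℂ) * (2 / (Complex.exp (z / 2) + Complex.exp (-(z / 2))))
        * (Complex.exp (z / 2) * (Complex.exp (z / 2) + Complex.exp (-(z / 2))))
        = Complex.exp (z / 2) * ((Complex.exp (z / 2) + Complex.exp (-(z / 2)))
            * (Complex.exp (z / 2) + Complex.exp (-(z / 2)))⁻¹) := by
      ring
    rw [hr, mul_inv_cancel₀ hne, mul_one]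
  -- iterated derivative of φ
  have hφd : iteratedDeriv (2 * k) φ 0
      = (Complex.I / 2) ^ (2 * k) * ((1 / 2 : ℂ) * iteratedDeriv (2 * k) Ψ 0) := by
    have hev : φ =ᶠ[nhds 0] fun z => (1 / 2 : ℂ) * Ψ ((Complex.I / 2) * z) :=
      Filter.eventually_of_mem (hUopen.mem_nhds h0U) hφΨ
    have hΨ2an : AnalyticOnNhd ℂ (fun w => (1 / 2 : ℂ) * Ψ w) V :=
      fun w hw => analyticAt_const.mul (hΨan w hw)
    have hsc := scaleDeriv hVopen hΨ2an (Complex.I / 2) (2 * k) 0 (by simpa using h0V)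
    simp only [mul_zero] at hsc
    rw [hev.iteratedDeriv_eq (2 * k), hsc,
      constMulDeriv hVopen hΨan (1 / 2 : ℂ) (2 * k) 0 h0V]
  -- put everything together
  have hfinal : iteratedDeriv (2 * k) Φ 0 = iteratedDeriv (2 * k) Ψ 0 := by
    rw [hΦd, hhvanish, hφd]
    have hI : (Complex.I / 2) ^ (2 * k) = ((-1 : ℂ) ^ k) / 2 ^ (2 * k) := by
      rw [div_pow, pow_mul, Complex.I_sq]
    have hsgn : ((-1 : ℂ)) ^ k * (-1) ^ k = 1 := by
      rw [← pow_add, ← two_mul, pow_mul]; norm_num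
    rw [hI]
    have h2ne : (2 : ℂ) ^ (2 * k) ≠ 0 := pow_ne_zero _ two_ne_zero
    rw [pow_succ]
    field_simp
    linear_combination (iteratedDeriv (2 * k) Ψ 0) * hsgn
  -- conclude over ℝ
  have : ((∑ r ∈ Finset.range (2 * k + 1), (-1 : ℝ) ^ (r + k)
      * (∑ i ∈ Finset.range (2 * k + 1 - r), (((2 * k + 1).choose i : ℕ) : ℝ))
      * ((r : ℝ) + 1 / 2) ^ (2 * k) : ℝ) : ℂ) = ((eulerNumber (2 * k) : ℝ) : ℂ) := by
    rw [hE, ← hfinal, hΦval]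
    push_cast
    refine Finset.sum_congr rfl fun r _ => ?_
    ring
  exact_mod_cast this


theorem alternating_sum_cardB_even (k d : ℕ) (hd : d = 2 * k) :
    (d.factorial : ℝ) *
      ∑ j ∈ Finset.Icc (-(k : ℤ)) (k : ℤ),
        (-1 : ℝ) ^ j * cardB d ((j : ℝ) + ((d : ℝ) + 1) / 2) =
    eulerNumber d := by
  subst hd
  rw [stepA k, stepB k]
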